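/- arXiv:2502.00215 — 3 statements merged into one kernel-verified Lean document; each statement's English description precedes it below -/
import Mathlib

section
/- Let a < b be real numbers, m a positive integer, g_j : ℝ^d × ℝ → ℝ continuous for j = 1,…,m, and q_j : ℝ → ℝ continuous exterior penalty functions (q_j(z) = 0 for z ≤ 0, q_j(z) > 0 for z > 0); define Λ(x,t) := Σ_{j=1}^m q_j(g_j(x,t)). Let x : ℝ → ℝ^d and t : ℝ → ℝ be continuous on [a,b] and let s : ℝ → ℝ be continuous on [a,b] with s(τ) > 0 on [a,b]. Then g_j(x(τ), t(τ)) ≤ 0 for all j = 1,…,m and all τ ∈ [a,b] if and only if there exists y : ℝ → ℝ, differentiable on [a,b], with y'(τ) = s(τ)·Λ(x(τ), t(τ)) for all τ ∈ [a,b] and y(a) = y(b). -/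
/-- Single-arc form of the isoperimetric reformulation of path constraints:
the path constraints `gⱼ(x(τ), t(τ)) ≤ 0` hold for all `τ ∈ [a,b]` iff there exists an
auxiliary state `y` with `y' = s·Λ(x,t)` on `[a,b]` and `y a = y b`, where
`Λ(x,t) = ∑ⱼ qⱼ(gⱼ(x,t))` is built from exterior penalty functions. -/
theorem path_constraints_iff_isoperimetric_single_arc
    (d m : ℕ) (hm : 0 < m) (a b : ℝ) (hab : a < b)
    (g : Fin m → (Fin d → ℝ) × ℝ → ℝ) (hg_cont : ∀ j, Continuous (g j))
    (q : Fin m → ℝ → ℝ) (hq_cont : ∀ j, Continuous (q j))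
    (hq_zero : ∀ j : Fin m, ∀ z : ℝ, z ≤ 0 → q j z = 0)
    (hq_pos : ∀ j : Fin m, ∀ z : ℝ, 0 < z → 0 < q j z)
    (Λ : (Fin d → ℝ) × ℝ → ℝ)
    (hΛ : ∀ x t, Λ (x, t) = ∑ j : Fin m, q j (g j (x, t)))
    (x : ℝ → Fin d → ℝ) (hx_cont : ContinuousOn x (Set.Icc a b))
    (t : ℝ → ℝ) (ht_cont : ContinuousOn t (Set.Icc a b))
    (s : ℝ → ℝ) (hs_cont : ContinuousOn s (Set.Icc a b))
    (hs_pos : ∀ τ ∈ Set.Icc a b, 0 < s τ) :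
    (∀ j : Fin m, ∀ τ ∈ Set.Icc a b, g j (x τ, t τ) ≤ 0) ↔
    (∃ y : ℝ → ℝ,
        (∀ τ ∈ Set.Icc a b,
          HasDerivWithinAt y (s τ * Λ (x τ, t τ)) (Set.Icc a b) τ) ∧
        y a = y b) := by
  have hΛ' : ∀ p : (Fin d → ℝ) × ℝ, Λ p = ∑ j : Fin m, q j (g j p) := by
    rintro ⟨u, v⟩; exact hΛ u v
  have hq_nonneg : ∀ j : Fin m, ∀ z : ℝ, 0 ≤ q j z := by
    intro j z
    rcases le_or_gt z 0 with h | h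
    · exact ge_of_eq (hq_zero j z h)
    · exact (hq_pos j z h).le
  constructor
  · intro hcon
    refine ⟨fun _ => 0, fun τ hτ => ?_, rfl⟩
    have : Λ (x τ, t τ) = 0 := by
      rw [hΛ]
      exact Finset.sum_eq_zero fun j _ => hq_zero j _ (hcon j τ hτ)
    rw [this, mul_zero]
    exact hasDerivWithinAt_const τ _ 0
  · rintro ⟨y, hy, hyab⟩
    set f : ℝ → ℝ := fun τ => s τ * Λ (x τ, t τ) with hf
    have hΛcont : Continuous Λ := by
      have : Λ = fun p => ∑ j : Fin m, q j (g j p) := funext hΛ'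
      rw [this]
      exact continuous_finset_sum _ fun j _ => (hq_cont j).comp (hg_cont j)
    have hfcont : ContinuousOn f (Set.Icc a b) :=
      hs_cont.mul (hΛcont.comp_continuousOn (hx_cont.prodMk ht_cont))
    have hfnn : ∀ τ ∈ Set.Icc a b, 0 ≤ f τ := by
      intro τ hτ
      apply mul_nonneg (hs_pos τ hτ).le
      rw [hΛ]
      exact Finset.sum_nonneg fun j _ => hq_nonneg j _
    have hycont : ContinuousOn y (Set.Icc a b) := fun τ hτ =>
      (hy τ hτ).differentiableWithinAt.continuousWithinAt
    have hfi : IntervalIntegrable f MeasureTheory.volume a b := by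
      apply ContinuousOn.intervalIntegrable
      rwa [Set.uIcc_of_le hab.le]
    have hderiv : ∀ τ ∈ Set.Ioo a b, HasDerivWithinAt y (f τ) (Set.Ioi τ) τ := by
      intro τ hτ
      exact ((hy τ (Set.Ioo_subset_Icc_self hτ)).hasDerivAt
        (Icc_mem_nhds hτ.1 hτ.2)).hasDerivWithinAt
    have hint : ∫ τ in a..b, f τ = y b - y a :=
      intervalIntegral.integral_eq_sub_of_hasDeriv_right_of_le hab.le hycont hderiv hfi
    have hint0 : ∫ τ in a..b, f τ = 0 := by rw [hint, hyab, sub_self]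
    have hae : f =ᵐ[MeasureTheory.volume.restrict (Set.Ioc a b)] 0 := by
      have := (intervalIntegral.integral_eq_zero_iff_of_le_of_nonneg_ae hab.le ?_ hfi).mp hint0
      · exact this
      · filter_upwards [MeasureTheory.ae_restrict_mem measurableSet_Ioc] with τ hτ
        exact hfnn τ (Set.Ioc_subset_Icc_self hτ)
    have haeIcc : f =ᵐ[MeasureTheory.volume.restrict (Set.Icc a b)] 0 := by
      rwa [← MeasureTheory.Measure.restrict_congr_set MeasureTheory.Ioc_ae_eq_Icc]
    have heq : Set.EqOn f 0 (Set.Icc a b) := by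
      apply MeasureTheory.Measure.eqOn_of_ae_eq haeIcc hfcont continuousOn_const
      rw [interior_Icc, closure_Ioo hab.ne]
    intro j τ hτ
    by_contra hgt
    push_neg at hgt
    have hΛ0 : Λ (x τ, t τ) = 0 := by
      have hs := (hs_pos τ hτ).ne'
      have := heq hτ
      simp only [hf, Pi.zero_apply] at this
      exact (mul_eq_zero.mp this).resolve_left hs
    rw [hΛ] at hΛ0
    have hterm : q j (g j (x τ, t τ)) = 0 :=
      (Finset.sum_eq_zero_iff_of_nonneg fun i _ => hq_nonneg i _).mp hΛ0 j (Finset.mem_univ j)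
    exact absurd hterm (hq_pos j _ hgt).ne'
end

section
/- Let n be a positive integer and for each i = 1,…,n let the i-th arc be the interval [i−1, i]. Let m be a positive integer, g_j : ℝ^d × ℝ → ℝ continuous for j = 1,…,m, and q_j : ℝ → ℝ continuous exterior penalty functions (q_j(z) = 0 for z ≤ 0, q_j(z) > 0 for z > 0); define Λ(x,t) := Σ_{j=1}^m q_j(g_j(x,t)). For each i let x_i : ℝ → ℝ^d and t_i : ℝ → ℝ be continuous on [i−1, i] and s_i : ℝ → ℝ be continuous on [i−1, i] with s_i(τ) > 0 on [i−1, i]. Then g_j(x_i(τ), t_i(τ)) ≤ 0 for all j = 1,…,m, all τ ∈ [i−1, i] and all i = 1,…,n, if and only if there exists a family of functions y_i : ℝ → ℝ, i = 1,…,n, each differentiable on [i−1, i] with y_i'(τ) = s_i(τ)·Λ(x_i(τ), t_i(τ)) for all τ ∈ [i−1, i] and satisfying the boundary conditions y_i(i−1) = y_i(i). -/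
/-- Multi-arc form (the paper's Theorem 1): with arcs `[i-1, i]` for `i = 1,…,n`
(indexed here by `i : Fin n`, the `i`-th arc being `[i, i+1]`), and possibly
discontinuous (impulsive) state across arc boundaries, the path constraints
`gⱼ(xᵢ(τ), tᵢ(τ)) ≤ 0` hold on every arc iff there exists a family of auxiliary
states `yᵢ` with `yᵢ' = sᵢ·Λ(xᵢ, tᵢ)` on each arc and matching boundary values
`yᵢ(i-1) = yᵢ(i)` on each arc. -/
theorem path_constraints_iff_isoperimetric_multi_arc
    (d m n : ℕ) (hm : 0 < m) (hn : 0 < n)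
    (g : Fin m → (Fin d → ℝ) × ℝ → ℝ) (hg_cont : ∀ j, Continuous (g j))
    (q : Fin m → ℝ → ℝ) (hq_cont : ∀ j, Continuous (q j))
    (hq_zero : ∀ j : Fin m, ∀ z : ℝ, z ≤ 0 → q j z = 0)
    (hq_pos : ∀ j : Fin m, ∀ z : ℝ, 0 < z → 0 < q j z)
    (Λ : (Fin d → ℝ) × ℝ → ℝ)
    (hΛ : ∀ x t, Λ (x, t) = ∑ j : Fin m, q j (g j (x, t)))
    (x : Fin n → ℝ → Fin d → ℝ)
    (hx_cont : ∀ i : Fin n, ContinuousOn (x i) (Set.Icc (i : ℝ) ((i : ℝ) + 1)))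
    (t : Fin n → ℝ → ℝ)
    (ht_cont : ∀ i : Fin n, ContinuousOn (t i) (Set.Icc (i : ℝ) ((i : ℝ) + 1)))
    (s : Fin n → ℝ → ℝ)
    (hs_cont : ∀ i : Fin n, ContinuousOn (s i) (Set.Icc (i : ℝ) ((i : ℝ) + 1)))
    (hs_pos : ∀ i : Fin n, ∀ τ ∈ Set.Icc (i : ℝ) ((i : ℝ) + 1), 0 < s i τ) :
    (∀ i : Fin n, ∀ j : Fin m, ∀ τ ∈ Set.Icc (i : ℝ) ((i : ℝ) + 1),
        g j (x i τ, t i τ) ≤ 0) ↔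
    (∃ y : Fin n → ℝ → ℝ, ∀ i : Fin n,
        (∀ τ ∈ Set.Icc (i : ℝ) ((i : ℝ) + 1),
          HasDerivWithinAt (y i) (s i τ * Λ (x i τ, t i τ))
            (Set.Icc (i : ℝ) ((i : ℝ) + 1)) τ) ∧
        y i (i : ℝ) = y i ((i : ℝ) + 1)) := by

  constructor
  · intro h
    refine ⟨fun _ _ => 0, fun i => ⟨fun τ hτ => ?_, rfl⟩⟩
    have hΛ0 : Λ (x i τ, t i τ) = 0 := by
      rw [hΛ]
      exact Finset.sum_eq_zero fun j _ => hq_zero j _ (h i j τ hτ)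
    rw [hΛ0, mul_zero]
    exact hasDerivWithinAt_const τ _ 0
  · rintro ⟨y, hy⟩ i j τ hτ
    set a : ℝ := (i : ℝ) with ha
    set b : ℝ := (i : ℝ) + 1 with hb
    have hab : a < b := lt_add_one _
    obtain ⟨hderiv, hbd⟩ := hy i
    set F : ℝ → ℝ := fun σ => s i σ * Λ (x i σ, t i σ) with hF
    have hΛnonneg : ∀ σ : ℝ, 0 ≤ Λ (x i σ, t i σ) := by
      intro σ
      rw [hΛ]
      refine Finset.sum_nonneg fun j' _ => ?_
      rcases le_or_gt (g j' (x i σ, t i σ)) 0 with h0 | h0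
      · rw [hq_zero j' _ h0]
      · exact (hq_pos j' _ h0).le
    have hFnonneg : ∀ σ ∈ Set.Icc a b, 0 ≤ F σ := fun σ hσ =>
      mul_nonneg (hs_pos i σ hσ).le (hΛnonneg σ)
    have hycont : ContinuousOn (y i) (Set.Icc a b) := fun σ hσ =>
      (hderiv σ hσ).continuousWithinAt
    have hmono : MonotoneOn (y i) (Set.Icc a b) := by
      apply monotoneOn_of_deriv_nonneg (convex_Icc a b) hycont
      · intro σ hσ
        rw [interior_Icc] at hσ
        exact ((hderiv σ (Set.Ioo_subset_Icc_self hσ)).hasDerivAt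
          (Icc_mem_nhds hσ.1 hσ.2)).differentiableAt.differentiableWithinAt
      · intro σ hσ
        rw [interior_Icc] at hσ
        rw [((hderiv σ (Set.Ioo_subset_Icc_self hσ)).hasDerivAt
          (Icc_mem_nhds hσ.1 hσ.2)).deriv]
        exact hFnonneg σ (Set.Ioo_subset_Icc_self hσ)
    have hconst : ∀ σ ∈ Set.Icc a b, y i σ = y i a := by
      intro σ hσ
      have h1 := hmono (Set.left_mem_Icc.2 hab.le) hσ hσ.1
      have h2 := hmono hσ (Set.right_mem_Icc.2 hab.le) hσ.2
      exact le_antisymm (h2.trans hbd.ge) h1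
    have hF0 : ∀ σ ∈ Set.Ioo a b, F σ = 0 := by
      intro σ hσ
      have hd1 : HasDerivAt (y i) (F σ) σ :=
        (hderiv σ (Set.Ioo_subset_Icc_self hσ)).hasDerivAt
          (Icc_mem_nhds hσ.1 hσ.2)
      have hev : ∀ᶠ ρ in nhds σ, y i ρ = y i a := by
        filter_upwards [Icc_mem_nhds hσ.1 hσ.2] with ρ hρ using hconst ρ hρ
      have hd0 : HasDerivAt (y i) 0 σ :=
        (hasDerivAt_const σ (y i a)).congr_of_eventuallyEq hev
      exact hd1.unique hd0
    have hΛfun : Λ = fun p => ∑ j' : Fin m, q j' (g j' p) := by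
      funext p
      exact hΛ p.1 p.2
    have hΛcont : Continuous Λ := by
      rw [hΛfun]
      exact continuous_finset_sum _ fun j' _ => (hq_cont j').comp (hg_cont j')
    have hFcont : ContinuousOn F (Set.Icc a b) :=
      (hs_cont i).mul (hΛcont.comp_continuousOn ((hx_cont i).prodMk (ht_cont i)))
    have hτcl : τ ∈ closure (Set.Ioo a b) := by
      rw [closure_Ioo hab.ne]
      exact hτ
    have hne : (nhdsWithin τ (Set.Ioo a b)).NeBot :=
      mem_closure_iff_nhdsWithin_neBot.mp hτcl
    have h1 : Filter.Tendsto F (nhdsWithin τ (Set.Ioo a b)) (nhds (F τ)) :=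
      (hFcont τ hτ).mono Set.Ioo_subset_Icc_self
    have h2 : Filter.Tendsto F (nhdsWithin τ (Set.Ioo a b)) (nhds 0) := by
      apply Filter.Tendsto.congr' _ tendsto_const_nhds
      filter_upwards [self_mem_nhdsWithin] with σ hσ using (hF0 σ hσ).symm
    have hFτ : F τ = 0 := tendsto_nhds_unique h1 h2
    have hΛτ : Λ (x i τ, t i τ) = 0 := by
      have hsτ := hs_pos i τ hτ
      have := hFτ
      simp only [hF] at this
      rcases mul_eq_zero.mp this with h' | h'
      · exact absurd h' hsτ.ne'
      · exact h'
    rw [hΛ] at hΛτ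
    have hqj : q j (g j (x i τ, t i τ)) = 0 := by
      have := (Finset.sum_eq_zero_iff_of_nonneg (fun j' _ => by
        rcases le_or_gt (g j' (x i τ, t i τ)) 0 with h0 | h0
        · rw [hq_zero j' _ h0]
        · exact (hq_pos j' _ h0).le)).mp hΛτ
      exact this j (Finset.mem_univ j)
    by_contra hgt
    push_neg at hgt
    exact (hq_pos j _ hgt).ne' hqj
end

section
/- Let α, β > 0, let J : ℝ^n → ℝ ∪ {+∞} be proper, lower semicontinuous and convex, let H : ℝ^m → ℝ be convex and α-Lipschitz continuous, and let c : ℝ^n → ℝ^m be continuously differentiable with β-Lipschitz continuous Jacobian (i.e., ‖∇c(z) − ∇c(w)‖ ≤ β‖z − w‖ in operator norm for all z, w). Define Θ(z) := J(z) + H(c(z)), and for ρ > 0 define the subproblem Θ^ρ(z; w) := J(z) + H(c(w) + ∇c(w)(z − w)) + (1/(2ρ))‖z − w‖₂². Fix z ∈ ℝ^n with Θ(z) < +∞ and let z₊ be the unique minimizer of Θ^ρ(·; z), and set G_ρ(z) := (z − z₊)/ρ. If ρ ≤ 1/(αβ), then Θ(z₊) ≤ Θ(z) − (1/ρ − αβ)·‖ρ·G_ρ(z)‖₂²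 = Θ(z) − (1/ρ − αβ)·‖z − z₊‖₂². -/
set_option maxHeartbeats 1000000


/-- Monotone-decrease inequality of the prox-linear method: with
`Θ = J + H ∘ c` (J proper lsc convex with values in `ℝ ∪ {+∞}`, H convex
`α`-Lipschitz, c continuously differentiable with `β`-Lipschitz Jacobian), if
`z₊` minimizes the prox-linear subproblem `Θ^ρ(·; z)` and `ρ ≤ 1/(αβ)`, then
`Θ(z₊) ≤ Θ(z) − (1/ρ − αβ)·‖z − z₊‖²`. -/
theorem proxlinear_monotone_decrease
    (n m : ℕ) (α β ρ : ℝ) (hα : 0 < α) (hβ : 0 < β) (hρ : 0 < ρ)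
    (hρle : ρ ≤ 1 / (α * β))
    (J : EuclideanSpace ℝ (Fin n) → EReal)
    (hJ_ne_bot : ∀ z, J z ≠ ⊥)
    (hJ_proper : ∃ z, J z ≠ ⊤)
    (hJ_lsc : LowerSemicontinuous J)
    (hJ_convex : ∀ z w : EuclideanSpace ℝ (Fin n), ∀ θ : ℝ, 0 ≤ θ → θ ≤ 1 →
      J (θ • z + (1 - θ) • w) ≤ ((θ : ℝ) : EReal) * J z + (((1 - θ) : ℝ) : EReal) * J w)
    (H : EuclideanSpace ℝ (Fin m) → ℝ)
    (hH_convex : ConvexOn ℝ Set.univ H)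
    (hH_lip : LipschitzWith ⟨α, hα.le⟩ H)
    (c : EuclideanSpace ℝ (Fin n) → EuclideanSpace ℝ (Fin m))
    (hc : ContDiff ℝ 1 c)
    (hc_lip : LipschitzWith ⟨β, hβ.le⟩ (fderiv ℝ c))
    (Θ : EuclideanSpace ℝ (Fin n) → EReal)
    (hΘ : ∀ z, Θ z = J z + ((H (c z) : ℝ) : EReal))
    (Θρ : EuclideanSpace ℝ (Fin n) → EuclideanSpace ℝ (Fin n) → EReal)
    (hΘρ : ∀ z w, Θρ z w =
      J z + ((H (c w + fderiv ℝ c w (z - w)) : ℝ) : EReal)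
        + ((1 / (2 * ρ) * ‖z - w‖ ^ 2 : ℝ) : EReal))
    (z zp : EuclideanSpace ℝ (Fin n))
    (hz_fin : Θ z < ⊤)
    (hzp_min : ∀ z', Θρ zp z ≤ Θρ z' z) :
    Θ zp ≤ Θ z - (((1 / ρ - α * β) * ‖z - zp‖ ^ 2 : ℝ) : EReal) := by
  set L := fderiv ℝ c z with hLdef
  set D : ℝ := ‖zp - z‖ ^ 2 with hDdef
  have hD0 : 0 ≤ D := sq_nonneg _
  -- J z is finite
  have hJz_top : J z ≠ ⊤ := by
    intro h
    rw [hΘ z, h] at hz_fin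
    simp [EReal.top_add_of_ne_bot] at hz_fin
  set Jz : ℝ := (J z).toReal with hJzdef
  have hJz : J z = (Jz : EReal) := (EReal.coe_toReal hJz_top (hJ_ne_bot z)).symm
  set Hz : ℝ := H (c z) with hHzdef
  set Hl : ℝ := H (c z + L (zp - z)) with hHldef
  -- Θρ z z = Θ z
  have hΘρzz : Θρ z z = Θ z := by
    rw [hΘρ, hΘ]
    simp
  -- J zp is finite
  have hmin_z : Θρ zp z ≤ Θ z := by rw [← hΘρzz]; exact hzp_min z
  have hJp_top : J zp ≠ ⊤ := by
    intro h
    rw [hΘρ zp z, h] at hmin_z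
    rw [EReal.top_add_of_ne_bot (EReal.coe_ne_bot _),
      EReal.top_add_of_ne_bot (EReal.coe_ne_bot _)] at hmin_z
    exact absurd (lt_of_le_of_lt hmin_z hz_fin) (lt_irrefl _)
  set Jp : ℝ := (J zp).toReal with hJpdef
  have hJp : J zp = (Jp : EReal) := (EReal.coe_toReal hJp_top (hJ_ne_bot zp)).symm
  -- key inequality for θ ∈ (0,1]
  have key : ∀ θ : ℝ, 0 < θ → θ ≤ 1 →
      Jp + Hl + 1 / (2 * ρ) * D ≤
        (θ * Jz + (1 - θ) * Jp) + (θ * Hz + (1 - θ) * Hl)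
          + 1 / (2 * ρ) * ((1 - θ) ^ 2 * D) := by
    intro θ hθ hθ1
    set x := θ • z + (1 - θ) • zp with hxdef
    have hx_sub : x - z = (1 - θ) • (zp - z) := by
      rw [hxdef]; module
    have hlin : fderiv ℝ c z (x - z) = (1 - θ) • (L (zp - z)) := by
      rw [hx_sub, map_smul]
    have hHx : H (c z + fderiv ℝ c z (x - z)) ≤ θ * Hz + (1 - θ) * Hl := by
      rw [hlin]
      have hcomb : c z + (1 - θ) • L (zp - z)
          = θ • c z + (1 - θ) • (c z + L (zp - z)) := by module
      rw [hcomb]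
      exact hH_convex.2 (Set.mem_univ _) (Set.mem_univ _) hθ.le (by linarith) (by ring)
    have hq : ‖x - z‖ ^ 2 = (1 - θ) ^ 2 * D := by
      rw [hx_sub, norm_smul, mul_pow, Real.norm_eq_abs, sq_abs, hDdef]
    have h1 := hzp_min x
    rw [hΘρ, hΘρ] at h1
    have hJx := hJ_convex z zp θ hθ.le hθ1
    rw [hJz, hJp] at hJx
    have hJx' : J x ≤ ((θ * Jz + (1 - θ) * Jp : ℝ) : EReal) := by
      refine hJx.trans_eq ?_
      rw [EReal.coe_add, EReal.coe_mul, EReal.coe_mul]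
    have h2 : J x + ((H (c z + fderiv ℝ c z (x - z)) : ℝ) : EReal)
        + ((1 / (2 * ρ) * ‖x - z‖ ^ 2 : ℝ) : EReal)
        ≤ (((θ * Jz + (1 - θ) * Jp) + (θ * Hz + (1 - θ) * Hl)
            + 1 / (2 * ρ) * ((1 - θ) ^ 2 * D) : ℝ) : EReal) := by
      rw [EReal.coe_add, EReal.coe_add]
      refine add_le_add (add_le_add hJx' ?_) ?_
      · exact_mod_cast hHx
      · rw [hq]
    have h3 : ((Jp + Hl + 1 / (2 * ρ) * D : ℝ) : EReal)
        ≤ (((θ * Jz + (1 - θ) * Jp) + (θ * Hz + (1 - θ) * Hl)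
            + 1 / (2 * ρ) * ((1 - θ) ^ 2 * D) : ℝ) : EReal) := by
      refine le_trans ?_ (h1.trans h2)
      rw [EReal.coe_add, EReal.coe_add, hJp, ← hLdef, ← hHldef, ← hDdef]
    exact_mod_cast h3
  -- strong-convexity consequence: Jp + Hl + (1/ρ) D ≤ Jz + Hz
  have key2 : Jp + Hl + 1 / ρ * D ≤ Jz + Hz := by
    have hmain : ∀ θ : ℝ, 0 < θ → θ ≤ 1 →
        Jp + Hl + 1 / (2 * ρ) * (2 - θ) * D ≤ Jz + Hz := by
      intro θ hθ hθ1
      have h := key θ hθ hθ1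
      have h2 : θ * (Jp + Hl + 1 / (2 * ρ) * (2 - θ) * D) ≤ θ * (Jz + Hz) := by
        nlinarith [h]
      exact (mul_le_mul_iff_right₀ hθ).mp h2
    refine le_of_forall_sub_le fun ε hε => ?_
    set θ : ℝ := min 1 (2 * ρ * ε / (D + 1)) with hθdef
    have hθpos : 0 < θ := lt_min one_pos (by positivity)
    have hθ1 : θ ≤ 1 := min_le_left _ _
    have hθ2 : θ ≤ 2 * ρ * ε / (D + 1) := min_le_right _ _
    have h := hmain θ hθpos hθ1
    have hbound : 1 / (2 * ρ) * θ * D ≤ ε := by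
      have h4 : θ * D ≤ (2 * ρ * ε / (D + 1)) * D :=
        mul_le_mul_of_nonneg_right hθ2 hD0
      have h5 : (2 * ρ * ε / (D + 1)) * D ≤ 2 * ρ * ε := by
        rw [div_mul_eq_mul_div, div_le_iff₀ (by positivity)]
        nlinarith
      have h6 : θ * D ≤ 2 * ρ * ε := h4.trans h5
      calc 1 / (2 * ρ) * θ * D = (θ * D) / (2 * ρ) := by ring
        _ ≤ (2 * ρ * ε) / (2 * ρ) := by
            exact div_le_div_of_nonneg_right h6 (by positivity) |>.trans_eq rfl
        _ = ε := by field_simp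
    have hid : 1 / (2 * ρ) * (2 - θ) * D = 1 / ρ * D - 1 / (2 * ρ) * θ * D := by
      field_simp
    linarith [h, hbound]
  -- Taylor bound
  have htaylor : ‖c zp - c z - L (zp - z)‖ ≤ (β * ‖zp - z‖) * ‖zp - z‖ := by
    refine Convex.norm_image_sub_le_of_norm_fderiv_le'
      (fun x _ => (hc.differentiable one_ne_zero).differentiableAt)
      (fun x hx => ?_) (convex_segment z zp) (left_mem_segment ℝ z zp)
      (right_mem_segment ℝ z zp)
    obtain ⟨a, b, ha, hb, hab, rfl⟩ := hx
    have hx_sub : a • z + b • zp - z = b • (zp - z) := by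
      have : a = 1 - b := by linarith
      rw [this]; module
    have hdist := hc_lip.dist_le_mul (a • z + b • zp) z
    rw [dist_eq_norm, dist_eq_norm, hx_sub, norm_smul, Real.norm_eq_abs,
      abs_of_nonneg hb] at hdist
    calc ‖fderiv ℝ c (a • z + b • zp) - L‖ ≤ (⟨β, hβ.le⟩ : NNReal) * (b * ‖zp - z‖) := hdist
      _ = β * (b * ‖zp - z‖) := by norm_num
      _ ≤ β * ‖zp - z‖ := by
          have hb1 : b ≤ 1 := by linarith
          nlinarith [mul_nonneg (mul_nonneg hβ.le (by linarith : (0:ℝ) ≤ 1 - b))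
            (norm_nonneg (zp - z))]
  -- Lipschitz bound on H
  have hH2 : H (c zp) ≤ Hl + α * (β * D) := by
    have hd := hH_lip.dist_le_mul (c zp) (c z + L (zp - z))
    rw [dist_eq_norm, dist_eq_norm] at hd
    have hn : c zp - (c z + L (zp - z)) = c zp - c z - L (zp - z) := by abel
    rw [hn] at hd
    have hd2 : ‖H (c zp) - Hl‖ ≤ α * (β * D) := by
      calc ‖H (c zp) - Hl‖ ≤ (⟨α, hα.le⟩ : NNReal) * ‖c zp - c z - L (zp - z)‖ := hd
        _ = α * ‖c zp - c z - L (zp - z)‖ := by norm_num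
        _ ≤ α * ((β * ‖zp - z‖) * ‖zp - z‖) :=
            mul_le_mul_of_nonneg_left htaylor hα.le
        _ = α * (β * D) := by rw [hDdef]; ring
    rw [Real.norm_eq_abs] at hd2
    have := (abs_le.mp hd2).2
    linarith
  -- conclude
  have hfin : Jp + H (c zp) ≤ Jz + Hz - (1 / ρ - α * β) * ‖z - zp‖ ^ 2 := by
    have hnorm : ‖z - zp‖ ^ 2 = D := by rw [hDdef, norm_sub_rev]
    rw [hnorm]
    nlinarith [key2, hH2, mul_pos hα hβ, hD0, mul_le_mul_of_nonneg_right
      (mul_le_mul_of_nonneg_left (le_refl β) hα.le) hD0]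
  calc Θ zp = ((Jp + H (c zp) : ℝ) : EReal) := by
        rw [hΘ, hJp, ← EReal.coe_add]
    _ ≤ ((Jz + Hz - (1 / ρ - α * β) * ‖z - zp‖ ^ 2 : ℝ) : EReal) := by exact_mod_cast hfin
    _ = Θ z - (((1 / ρ - α * β) * ‖z - zp‖ ^ 2 : ℝ) : EReal) := by
        rw [hΘ, hJz, ← EReal.coe_add, ← EReal.coe_sub]
end
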